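/- If A is a symmetric positive definite n×n real matrix, B is an m×n real matrix, and M is a symmetric positive definite m×m matrix such that for all nonzero vectors u ∈ ℝⁿ, uᵀ Bᵀ M⁻¹ B u ≤ d · uᵀ A u for some constant d > 0, then for all nonzero z ∈ ℝᵐ, zᵀ (B A⁻¹ Bᵀ) z ≤ d · zᵀ M z. -/

import Mathlib

open Matrix

theorem schur_quadratic_bound {n m : ℕ}
    (A : Matrix (Fin n) (Fin n) ℝ) (B : Matrix (Fin m) (Fin n) ℝ)
    (M : Matrix (Fin m) (Fin m) ℝ) (d : ℝ)
    (hA : A.PosDef) (hM : M.PosDef) (hd : 0 < d)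
    (hbound : ∀ u : Fin n → ℝ, u ≠ 0 →
      u ⬝ᵥ (Bᵀ * M⁻¹ * B).mulVec u ≤ d * (u ⬝ᵥ A.mulVec u)) :
    ∀ z : Fin m → ℝ, z ≠ 0 →
      z ⬝ᵥ (B * A⁻¹ * Bᵀ).mulVec z ≤ d * (z ⬝ᵥ M.mulVec z) := by
  intro z hz
  have hAinv : Invertible A := hA.isUnit.invertible
  have hMinv : Invertible M := hM.isUnit.invertible
  set v : Fin n → ℝ := Bᵀ.mulVec z with hv
  set w : Fin n → ℝ := A⁻¹.mulVec v with hw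
  set y : Fin m → ℝ := M⁻¹.mulVec (B.mulVec w) with hy
  set s : ℝ := z ⬝ᵥ (B * A⁻¹ * Bᵀ).mulVec z with hs
  set c : ℝ := z ⬝ᵥ M.mulVec z with hc
  set q : ℝ := y ⬝ᵥ M.mulVec y with hq
  have hcpos : 0 < c := hM.re_dotProduct_pos hz
  -- s = v ⬝ᵥ w
  have hs1 : s = v ⬝ᵥ w := by
    rw [hs, ← mulVec_mulVec, ← mulVec_mulVec, dotProduct_mulVec, ← mulVec_transpose]
  -- w ⬝ᵥ A w = s
  have hAw : A.mulVec w = v := by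
    rw [hw, mulVec_mulVec, mul_inv_of_invertible A, one_mulVec]
  have hs2 : w ⬝ᵥ A.mulVec w = s := by
    rw [hAw, dotProduct_comm, hs1]
  -- M y = B w
  have hMy : M.mulVec y = B.mulVec w := by
    rw [hy, mulVec_mulVec, mul_inv_of_invertible M, one_mulVec]
  -- w ⬝ᵥ (BᵀM⁻¹B) w = q
  have hq1 : w ⬝ᵥ (Bᵀ * M⁻¹ * B).mulVec w = q := by
    rw [hq, hMy, ← mulVec_mulVec, ← mulVec_mulVec, dotProduct_mulVec, ← mulVec_transpose,
      transpose_transpose, dotProduct_comm]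
  -- z ⬝ᵥ M y = s
  have hzMy : z ⬝ᵥ M.mulVec y = s := by
    rw [hMy, dotProduct_mulVec, ← mulVec_transpose, hs1]
  have hyMz : y ⬝ᵥ M.mulVec z = s := by
    have hMT : Mᵀ = M := by
      have := hM.isHermitian.eq
      simpa [conjTranspose_eq_transpose_of_trivial] using this
    rw [dotProduct_mulVec, ← mulVec_transpose, hMT, dotProduct_comm, hzMy]
  have hqnn : 0 ≤ q := hM.posSemidef.re_dotProduct_nonneg y
  -- Cauchy-Schwarz via discriminant
  have hCS : s ^ 2 ≤ q * c := by
    have key : ∀ t : ℝ, 0 ≤ q * (t * t) + (-(2 * s)) * t + c := by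
      intro t
      have h0 : 0 ≤ (z - t • y) ⬝ᵥ M.mulVec (z - t • y) :=
        hM.posSemidef.re_dotProduct_nonneg _
      have : (z - t • y) ⬝ᵥ M.mulVec (z - t • y)
          = q * (t * t) + (-(2 * s)) * t + c := by
        simp only [mulVec_sub, mulVec_smul, sub_dotProduct, dotProduct_sub,
          smul_dotProduct, dotProduct_smul, smul_eq_mul, hzMy, hyMz, ← hq, ← hc]
        ring
      linarith [this ▸ h0]
    have := discrim_le_zero key
    rw [discrim] at this
    nlinarith
  by_cases hw0 : w = 0
  · have : s = 0 := by rw [hs1, hw0, dotProduct_zero]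
    rw [this]; positivity
  · have hb := hbound w hw0
    rw [hq1, hs2] at hb
    -- q ≤ d * s, s^2 ≤ q*c
    rcases le_or_gt s 0 with h | h
    · nlinarith
    · nlinarith
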